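/- Let Z, Y be nonempty finite types, p a pmf on Z × Y, and q : Z → (Y → ℝ) a family such that each q z is a pmf on Y and q z y > 0 whenever p(z,y) > 0. Then the mutual information satisfies I(Z;Y) ≥ ∑_{(z,y) : p(z,y) > 0} p(z,y) · log(q z y) + H(Y), where p_Y is the marginal of p on Y; i.e., the expected log-likelihood of any variational decoder plus the entropy of Y lower-bounds the mutual information (the unconditional form of the paper's Lemma 1). -/

import Mathlib

/-- **Unconditional form of the paper's Lemma 1.**
For a pmf `p` on `Z × Y` and a family of variational decoders `q z` (each a pmf on `Y`,
positive wherever `p` is positive), the mutual information `I(Z;Y)` is bounded below by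
the expected log-likelihood of the decoder plus the entropy `H(Y)` of the `Y`-marginal.
Marginals: `p_Z z = ∑ y', p (z,y')`, `p_Y y = ∑ z', p (z',y)`. -/
theorem variational_lower_bound_mutual_information
    {Z Y : Type*} [Fintype Z] [Fintype Y] [Nonempty Z] [Nonempty Y]
    (p : Z × Y → ℝ)
    (hp0 : ∀ x, 0 ≤ p x) (hp1 : ∑ x : Z × Y, p x = 1)
    (q : Z → Y → ℝ)
    (hq0 : ∀ z y, 0 ≤ q z y)
    (hq1 : ∀ z, ∑ y : Y, q z y = 1)
    (hqpos : ∀ z y, 0 < p (z, y) → 0 < q z y) :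
    (∑ z : Z, ∑ y : Y, if 0 < p (z, y) then p (z, y) * Real.log (q z y) else 0)
      + (-(∑ y : Y,
            if 0 < (∑ z' : Z, p (z', y)) then
              (∑ z' : Z, p (z', y)) * Real.log (∑ z' : Z, p (z', y))
            else 0))
      ≤ ∑ z : Z, ∑ y : Y,
          if 0 < p (z, y) then
            p (z, y) *
              Real.log (p (z, y) / ((∑ y' : Y, p (z, y')) * (∑ z' : Z, p (z', y))))
          else 0 := by
  classical
  set pZ : Z → ℝ := fun z => ∑ y' : Y, p (z, y') with hpZdef
  set pY : Y → ℝ := fun y => ∑ z' : Z, p (z', y) with hpYdef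
  have hpZ0 : ∀ z, 0 ≤ pZ z := fun z => Finset.sum_nonneg fun _ _ => hp0 _
  have hpY0 : ∀ y, 0 ≤ pY y := fun y => Finset.sum_nonneg fun _ _ => hp0 _
  have hpZpos : ∀ z y, 0 < p (z, y) → 0 < pZ z := fun z y h =>
    lt_of_lt_of_le h (Finset.single_le_sum (fun y' _ => hp0 (z, y')) (Finset.mem_univ y))
  have hpYpos : ∀ z y, 0 < p (z, y) → 0 < pY y := fun z y h =>
    lt_of_lt_of_le h (Finset.single_le_sum (fun z' _ => hp0 (z', y)) (Finset.mem_univ z))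
  -- rewrite the entropy term as a double sum over the support of p
  have hH : (∑ y : Y, if 0 < pY y then pY y * Real.log (pY y) else 0)
      = ∑ z : Z, ∑ y : Y, if 0 < p (z, y) then p (z, y) * Real.log (pY y) else 0 := by
    rw [Finset.sum_comm]
    refine Finset.sum_congr rfl fun y _ => ?_
    by_cases h : 0 < pY y
    · rw [if_pos h]
      have : pY y * Real.log (pY y) = ∑ z : Z, p (z, y) * Real.log (pY y) := by
        rw [← Finset.sum_mul]
      rw [this]
      refine Finset.sum_congr rfl fun z _ => ?_
      by_cases hz : 0 < p (z, y)
      · rw [if_pos hz]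
      · rw [if_neg hz]
        have : p (z, y) = 0 := le_antisymm (not_lt.1 hz) (hp0 _)
        simp [this]
    · rw [if_neg h]
      have hz : ∀ z, p (z, y) = 0 := by
        intro z
        by_contra hc
        exact h (hpYpos z y ((hp0 _).lt_of_ne (Ne.symm hc)))
      simp [hz]
  -- the KL-divergence term
  set D : ℝ := ∑ z : Z, ∑ y : Y,
      if 0 < p (z, y) then p (z, y) * Real.log (p (z, y) / (pZ z * q z y)) else 0 with hDdef
  -- nonnegativity of D
  have hD0 : 0 ≤ D := by
    have key : ∀ z y, (p (z, y) - pZ z * q z y)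
        ≤ (if 0 < p (z, y) then p (z, y) * Real.log (p (z, y) / (pZ z * q z y)) else 0) := by
      intro z y
      by_cases h : 0 < p (z, y)
      · rw [if_pos h]
        have hr : 0 < pZ z * q z y := mul_pos (hpZpos z y h) (hqpos z y h)
        have hx : 0 < p (z, y) / (pZ z * q z y) := div_pos h hr
        have hlog := Real.one_sub_inv_le_log_of_pos hx
        have hinv : (p (z, y) / (pZ z * q z y))⁻¹ = pZ z * q z y / p (z, y) := by
          rw [inv_div]
        rw [hinv] at hlog
        have := mul_le_mul_of_nonneg_left hlog (le_of_lt h)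
        calc p (z, y) - pZ z * q z y
            = p (z, y) * (1 - pZ z * q z y / p (z, y)) := by
              field_simp
          _ ≤ p (z, y) * Real.log (p (z, y) / (pZ z * q z y)) := this
      · rw [if_neg h]
        have hp' : p (z, y) = 0 := le_antisymm (not_lt.1 h) (hp0 _)
        have : 0 ≤ pZ z * q z y := mul_nonneg (hpZ0 z) (hq0 z y)
        linarith
    have hsum : (∑ z : Z, ∑ y : Y, (p (z, y) - pZ z * q z y)) ≤ D := by
      refine Finset.sum_le_sum fun z _ => Finset.sum_le_sum fun y _ => key z y
    have hval : (∑ z : Z, ∑ y : Y, (p (z, y) - pZ z * q z y)) = 0 := by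
      have h1 : (∑ z : Z, ∑ y : Y, p (z, y)) = 1 := by
        rw [← hp1, ← Fintype.sum_prod_type]
      have h2 : (∑ z : Z, ∑ y : Y, pZ z * q z y) = 1 := by
        have : ∀ z : Z, (∑ y : Y, pZ z * q z y) = pZ z := by
          intro z; rw [← Finset.mul_sum, hq1 z, mul_one]
        rw [Finset.sum_congr rfl fun z _ => this z]
        rw [hpZdef, ← Fintype.sum_prod_type, hp1]
      simp only [Finset.sum_sub_distrib]
      rw [h1, h2]; ring
    linarith
  -- decompose each term of the RHS
  have hsplit : (∑ z : Z, ∑ y : Y,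
        if 0 < p (z, y) then p (z, y) * Real.log (p (z, y) / (pZ z * pY y)) else 0)
      = D + ((∑ z : Z, ∑ y : Y, if 0 < p (z, y) then p (z, y) * Real.log (q z y) else 0)
           - (∑ z : Z, ∑ y : Y, if 0 < p (z, y) then p (z, y) * Real.log (pY y) else 0)) := by
    have : ∀ z y, (if 0 < p (z, y) then p (z, y) * Real.log (p (z, y) / (pZ z * pY y)) else 0)
        = (if 0 < p (z, y) then p (z, y) * Real.log (p (z, y) / (pZ z * q z y)) else 0)
          + ((if 0 < p (z, y) then p (z, y) * Real.log (q z y) else 0)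
            - (if 0 < p (z, y) then p (z, y) * Real.log (pY y) else 0)) := by
      intro z y
      by_cases h : 0 < p (z, y)
      · simp only [if_pos h]
        have hzp := hpZpos z y h
        have hyp := hpYpos z y h
        have hqp := hqpos z y h
        rw [Real.log_div (ne_of_gt h) (ne_of_gt (mul_pos hzp hyp)),
            Real.log_div (ne_of_gt h) (ne_of_gt (mul_pos hzp hqp)),
            Real.log_mul (ne_of_gt hzp) (ne_of_gt hyp),
            Real.log_mul (ne_of_gt hzp) (ne_of_gt hqp)]
        ring
      · simp only [if_neg h]; ring
    calc (∑ z : Z, ∑ y : Y,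
        if 0 < p (z, y) then p (z, y) * Real.log (p (z, y) / (pZ z * pY y)) else 0)
        = ∑ z : Z, ∑ y : Y,
          ((if 0 < p (z, y) then p (z, y) * Real.log (p (z, y) / (pZ z * q z y)) else 0)
          + ((if 0 < p (z, y) then p (z, y) * Real.log (q z y) else 0)
            - (if 0 < p (z, y) then p (z, y) * Real.log (pY y) else 0))) := by
          exact Finset.sum_congr rfl fun z _ => Finset.sum_congr rfl fun y _ => this z y
      _ = _ := by
          simp only [Finset.sum_add_distrib, Finset.sum_sub_distrib, hDdef]
  rw [hH]
  rw [hsplit]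
  linarith
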